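/- There exist nonnegative measurable functions ξ^(s) on [0,1], each in L^p for a given p > 1, such that the series ∑_{s≥1} ξ^(s)(a) t^s converges for every t ∈ ℝ and every a ∈ (0,1] (so the pointwise radius of convergence is infinite for all a), while the series of norms ∑_{s≥1} ‖ξ^(s)‖_p t^s has a prescribed finite radius of convergence R_p = 1/γ for any given γ ≥ 1. -/

import Mathlib

open MeasureTheory
open scoped ENNReal

/-- The radius of convergence of the power series `∑ c s * t ^ s`. -/
noncomputable def seriesRadius (c : ℕ → ℝ) : ℝ≥0∞ :=
  sSup {r : ℝ≥0∞ | ∃ t : ℝ, r = ENNReal.ofReal t ∧ Summable (fun s : ℕ => c s * t ^ s)}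

/-- Counterexample: there exist nonnegative measurable functions `ξ s` on `(0,1]`, each in
`L^p`, whose pointwise series `∑ ξ s a * t^s` converges for every `t` and every `a ∈ (0,1]`
(infinite pointwise radius of convergence), while the series of `L^p` norms has any
prescribed finite radius of convergence `1/γ`, for any `γ ≥ 1`. -/
theorem stmt5 (p : ℝ) (hp : 1 < p) (γ : ℝ) (hγ : 1 ≤ γ) :
    ∃ ξ : ℕ → ℝ → ℝ,
      (∀ s, Measurable (ξ s)) ∧
      (∀ s a, 0 ≤ ξ s a) ∧
      (∀ s, MemLp (ξ s) (ENNReal.ofReal p) (volume.restrict (Set.Ioc (0:ℝ) 1))) ∧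
      (∀ (t : ℝ), ∀ a ∈ Set.Ioc (0:ℝ) 1, Summable (fun s : ℕ => ξ s a * t ^ s)) ∧
      seriesRadius
          (fun s => (eLpNorm (ξ s) (ENNReal.ofReal p) (volume.restrict (Set.Ioc (0:ℝ) 1))).toReal)
        = ENNReal.ofReal (1 / γ) := by
  have hp0 : (0:ℝ) < p := one_pos.trans hp
  have hγ0 : (0:ℝ) < γ := one_pos.trans_le hγ
  have hpne : ENNReal.ofReal p ≠ 0 := by
    simp [ENNReal.ofReal_eq_zero, not_le, hp0]
  have hpnetop : ENNReal.ofReal p ≠ ∞ := ENNReal.ofReal_ne_top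
  set μ := volume.restrict (Set.Ioc (0:ℝ) 1) with hμ
  set ℓ : ℕ → ℝ := fun s => 1/((s:ℝ)+1) - 1/((s:ℝ)+2) with hℓ
  have hℓpos : ∀ s : ℕ, (0:ℝ) < ℓ s := by
    intro s
    have h1 : (0:ℝ) < (s:ℝ)+1 := by positivity
    have h2 : (0:ℝ) < (s:ℝ)+2 := by positivity
    rw [hℓ]
    simp only
    rw [sub_pos, div_lt_div_iff₀ h2 h1]
    nlinarith
  set h : ℕ → ℝ := fun s => γ^s / (ℓ s)^(1/p) with hh
  have hhpos : ∀ s, 0 < h s := fun s =>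
    div_pos (pow_pos hγ0 s) (Real.rpow_pos_of_pos (hℓpos s) _)
  set I : ℕ → Set ℝ := fun s => Set.Ioc (1/((s:ℝ)+2)) (1/((s:ℝ)+1)) with hI
  have hIsub : ∀ s, I s ⊆ Set.Ioc (0:ℝ) 1 := by
    intro s x hx
    have h1 : (0:ℝ) < (s:ℝ)+1 := by positivity
    have h2 : (0:ℝ) < (s:ℝ)+2 := by positivity
    constructor
    · exact lt_trans (by positivity) hx.1
    · refine le_trans hx.2 ?_
      rw [div_le_one h1]; linarith
  have hμI : ∀ s, μ (I s) = ENNReal.ofReal (ℓ s) := by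
    intro s
    rw [hμ, Measure.restrict_apply (measurableSet_Ioc)]
    rw [Set.inter_eq_self_of_subset_left (hIsub s)]
    exact Real.volume_Ioc
  set ξ : ℕ → ℝ → ℝ := fun s => (I s).indicator (fun _ => h s) with hξ
  have hnorm : ∀ s, (eLpNorm (ξ s) (ENNReal.ofReal p) μ).toReal = γ ^ s := by
    intro s
    rw [hξ]
    simp only
    rw [eLpNorm_indicator_const measurableSet_Ioc hpne hpnetop]
    rw [hμI s, ENNReal.toReal_mul, ← ENNReal.toReal_rpow,
      ENNReal.toReal_ofReal (hℓpos s).le, ENNReal.toReal_ofReal hp0.le,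
      toReal_enorm, Real.norm_eq_abs, abs_of_pos (hhpos s), hh]
    simp only
    rw [div_mul_cancel₀]
    exact (Real.rpow_pos_of_pos (hℓpos s) _).ne'
  refine ⟨ξ, ?_, ?_, ?_, ?_, ?_⟩
  · intro s
    exact Measurable.indicator measurable_const measurableSet_Ioc
  · intro s a
    exact Set.indicator_nonneg (fun _ _ => (hhpos s).le) a
  · intro s
    refine ⟨(Measurable.indicator measurable_const measurableSet_Ioc).aestronglyMeasurable, ?_⟩
    rw [hξ]
    simp only
    rw [eLpNorm_indicator_const measurableSet_Ioc hpne hpnetop]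
    exact ENNReal.mul_lt_top enorm_lt_top
      (ENNReal.rpow_lt_top_of_nonneg (by positivity) (by rw [hμI s]; exact ENNReal.ofReal_ne_top))
  · intro t a ha
    apply summable_of_ne_finset_zero (s := Finset.range ⌈1/a⌉₊)
    intro s hs
    rw [Finset.mem_range, not_lt] at hs
    have hsa : (1:ℝ)/a ≤ s := le_trans (Nat.le_ceil _) (by exact_mod_cast hs)
    have ha0 : 0 < a := ha.1
    have : 1/((s:ℝ)+1) < a := by
      rw [div_lt_iff₀ (by positivity)]
      rw [div_le_iff₀ ha0] at hsa
      nlinarith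
    have : a ∉ I s := fun hmem => absurd hmem.2 (not_le.mpr this)
    simp [hξ, Set.indicator_of_notMem this]
  · simp only [hnorm]
    apply le_antisymm
    · apply sSup_le
      rintro r ⟨t, rfl, hsum⟩
      have hsum' : Summable (fun s : ℕ => (γ * t) ^ s) := by
        simpa [mul_pow] using hsum
      have htlt : |γ * t| < 1 := by
        by_contra hle
        push_neg at hle
        have := hsum'.tendsto_atTop_zero
        have hb : ∀ s : ℕ, (1:ℝ) ≤ |(γ * t) ^ s| := by
          intro s
          rw [abs_pow]
          exact one_le_pow₀ hle
        have h0 : Filter.Tendsto (fun s : ℕ => |(γ * t) ^ s|) Filter.atTop (nhds 0) := by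
          simpa using this.abs
        have := h0.eventually (eventually_lt_nhds (by norm_num : (0:ℝ) < 1))
        rcases this.exists with ⟨s, hs⟩
        exact absurd (hb s) (not_le.mpr hs)
      have ht : t < 1/γ := by
        have : γ * t < 1 := (le_abs_self _).trans_lt htlt
        rw [lt_div_iff₀ hγ0]
        linarith [mul_comm γ t ▸ this]
      exact ENNReal.ofReal_le_ofReal ht.le
    · by_contra hlt
      push_neg at hlt
      have h1γ : (0:ℝ) < 1/γ := by positivity
      rcases ENNReal.lt_iff_exists_real_btwn.mp hlt with ⟨q, hq0, hq1, hq2⟩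
      have hqlt : q < 1/γ := by
        have := (ENNReal.ofReal_lt_ofReal_iff h1γ).mp hq2
        exact this
      have hmem : ENNReal.ofReal q ∈
          {r : ℝ≥0∞ | ∃ t : ℝ, r = ENNReal.ofReal t ∧
            Summable (fun s : ℕ => γ ^ s * t ^ s)} := by
        refine ⟨q, rfl, ?_⟩
        have : Summable (fun s : ℕ => (γ * q) ^ s) := by
          apply summable_geometric_of_lt_one (by positivity)
          rw [lt_div_iff₀ hγ0] at hqlt
          linarith [mul_comm q γ ▸ hqlt]
        simpa [mul_pow] using this
      exact absurd (le_sSup hmem) (not_le.mpr hq1)
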